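/- Let 0 < D < 1, δ ≥ 0, and let F ⊆ {0,…,N−1} satisfy Z^{(i)} ≥ 1 − 2δ² for every i ∈ F. Then the average over all frozen vectors of the normalized average distortion satisfies Σ_{ũ_F ∈ {0,1}^{|F|}} 2^{−|F|} · (1/N) · D_N(F, ũ_F) ≤ D + 2|F|δ. -/

import Mathlib

open Finset

noncomputable section

/-- The polarization kernel `G₂ = [[1,0],[1,1]]` over GF(2). -/
def G2 : Matrix (Fin 2) (Fin 2) (ZMod 2) := !![1, 0; 1, 1]

/-- Index identification `Fin 2 × Fin (2^n) ≃ Fin (2^(n+1))`. -/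
def finPowEquiv (n : ℕ) : Fin 2 × Fin (2 ^ n) ≃ Fin (2 ^ (n + 1)) :=
  finProdFinEquiv.trans (finCongr (by rw [pow_succ]; ring))

/-- The `n`-fold Kronecker power `G₂^{⊗n}` over GF(2). -/
def kronPow : (n : ℕ) → Matrix (Fin (2 ^ n)) (Fin (2 ^ n)) (ZMod 2)
  | 0 => 1
  | n + 1 => Matrix.reindex (finPowEquiv n) (finPowEquiv n)
      (Matrix.kroneckerMap (· * ·) G2 (kronPow n))

/-- Reversal of the `n`-bit binary expansion of `i`. -/
def bitRevNat (n i : ℕ) : ℕ :=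
  ∑ k ∈ Finset.range n, if Nat.testBit i (n - 1 - k) then 2 ^ k else 0

lemma sum_range_two_pow_lt (n : ℕ) : ∑ k ∈ Finset.range n, 2 ^ k < 2 ^ n := by
  induction n with
  | zero => simp
  | succ m ih => rw [Finset.sum_range_succ, pow_succ]; omega

lemma bitRevNat_lt (n i : ℕ) : bitRevNat n i < 2 ^ n := by
  have h1 : bitRevNat n i ≤ ∑ k ∈ Finset.range n, 2 ^ k :=
    Finset.sum_le_sum (fun k _ => by split <;> simp)
  have h2 := sum_range_two_pow_lt n
  omega

/-- The bit-reversal permutation matrix `Aₙ`. -/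
def bitRevMatrix (n : ℕ) : Matrix (Fin (2 ^ n)) (Fin (2 ^ n)) (ZMod 2) :=
  fun i j => if (j : ℕ) = bitRevNat n (i : ℕ) then 1 else 0

/-- The polar transform matrix `Hₙ = Aₙ G₂^{⊗n}`. -/
def polarH (n : ℕ) : Matrix (Fin (2 ^ n)) (Fin (2 ^ n)) (ZMod 2) :=
  bitRevMatrix n * kronPow n

/-- BSC(D) transition probability `W(y∣x)`. -/
def bsc (D : ℝ) (y x : ZMod 2) : ℝ := if y = x then 1 - D else D

/-- The polar transform `x̄ = ū Hₙ` of a word `ū`. -/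
def polarEnc (n : ℕ) (u : Fin (2 ^ n) → ZMod 2) : Fin (2 ^ n) → ZMod 2 :=
  Matrix.vecMul u (polarH n)

-- ## bit reversal involution

lemma testBit_sum_pow (f : ℕ → Bool) (n : ℕ) : ∀ m : ℕ,
    (∑ k ∈ Finset.range n, if f k then 2 ^ k else 0).testBit m
      = if m < n then f m else false := by
  induction n with
  | zero => intro m; simp
  | succ n ih =>
    intro m
    rw [Finset.sum_range_succ]
    set S := ∑ k ∈ Finset.range n, if f k then 2 ^ k else 0 with hS
    have hSlt : S < 2 ^ n := by
      have h1 : S ≤ ∑ k ∈ Finset.range n, 2 ^ k :=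
        Finset.sum_le_sum (fun k _ => by split <;> simp)
      have h2 := sum_range_two_pow_lt n
      omega
    set b : ℕ := (if f n then 2 ^ n else 0) with hb
    rcases lt_trichotomy m n with hm | hm | hm
    · have h2 : (S + b).testBit m = S.testBit m := by
        have hq : ∃ q, b = 2 ^ (m + 1) * q := by
          rcases le_iff_exists_add.mp (Nat.succ_le_of_lt hm) with ⟨d, hd⟩
          by_cases hf : f n
          · exact ⟨2 ^ d, by rw [hb, if_pos hf, hd, pow_add]⟩
          · exact ⟨0, by simp [hb, hf]⟩
        rcases hq with ⟨q, hq⟩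
        rw [Nat.testBit_eq_decide_div_mod_eq, Nat.testBit_eq_decide_div_mod_eq, hq, pow_succ]
        have h2m : 0 < 2 ^ m := Nat.pow_pos (by norm_num)
        rw [show 2 ^ m * 2 * q = 2 ^ m * (2 * q) by ring,
          Nat.add_mul_div_left _ _ h2m, Nat.add_mul_mod_self_left]
      rw [h2, ih m]
      simp [hm, Nat.lt_succ_of_lt hm]
    · subst hm
      have : (S + b) / 2 ^ m = if f m then 1 else 0 := by
        by_cases hf : f m
        · rw [if_pos hf, hb, if_pos hf, Nat.add_div_right _ (Nat.pow_pos (by norm_num)),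
            Nat.div_eq_of_lt hSlt]
        · rw [if_neg hf, hb, if_neg hf, Nat.add_zero, Nat.div_eq_of_lt hSlt]
      rw [Nat.testBit_eq_decide_div_mod_eq, this]
      split <;> simp_all
    · have hlt : S + b < 2 ^ m := by
        have hble : b ≤ 2 ^ n := by rw [hb]; split <;> simp
        have : 2 ^ (n+1) ≤ 2 ^ m := Nat.pow_le_pow_right (by norm_num) hm
        have : 2 ^ n + 2 ^ n ≤ 2 ^ m := by rw [← two_mul, ← pow_succ']; omega
        omega
      rw [Nat.testBit_eq_false_of_lt hlt]
      have : ¬ m < n + 1 := by omega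
      simp [this]

lemma testBit_bitRevNat (n i m : ℕ) :
    (bitRevNat n i).testBit m = if m < n then i.testBit (n - 1 - m) else false :=
  testBit_sum_pow _ n m

lemma bitRevNat_bitRevNat (n i : ℕ) (hi : i < 2 ^ n) :
    bitRevNat n (bitRevNat n i) = i := by
  apply Nat.eq_of_testBit_eq
  intro k
  rw [testBit_bitRevNat]
  by_cases hk : k < n
  · rw [if_pos hk, testBit_bitRevNat, if_pos (by omega)]
    congr 1
    omega
  · rw [if_neg hk]
    exact (Nat.testBit_eq_false_of_lt (lt_of_lt_of_le hi
      (Nat.pow_le_pow_right (by norm_num) (by omega)))).symm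

/-- bit reversal as a map on `Fin (2^n)`. -/
def bitRev (n : ℕ) (i : Fin (2 ^ n)) : Fin (2 ^ n) := ⟨bitRevNat n i, bitRevNat_lt n i⟩

lemma bitRev_bitRev (n : ℕ) (i : Fin (2 ^ n)) : bitRev n (bitRev n i) = i := by
  apply Fin.ext
  exact bitRevNat_bitRevNat n i i.isLt

lemma bitRevMatrix_mul_self (n : ℕ) : bitRevMatrix n * bitRevMatrix n = 1 := by
  ext i j
  rw [Matrix.mul_apply]
  have : ∀ k, bitRevMatrix n i k * bitRevMatrix n k j
      = if k = bitRev n i then (if (j : ℕ) = bitRevNat n (k : ℕ) then 1 else 0) else 0 := by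
    intro k
    unfold bitRevMatrix
    by_cases hk : k = bitRev n i
    · have hk' : (k : ℕ) = bitRevNat n (i : ℕ) := by rw [hk]; rfl
      rw [if_pos hk', if_pos hk, one_mul]
    · have hk' : ¬ (k : ℕ) = bitRevNat n (i : ℕ) := fun h => hk (Fin.ext h)
      rw [if_neg hk', if_neg hk, zero_mul]
  rw [Finset.sum_congr rfl (fun k _ => this k), Finset.sum_ite_eq' _ (bitRev n i)]
  simp only [Finset.mem_univ, if_true]
  have hrev : bitRevNat n ((bitRev n i : Fin (2^n)) : ℕ) = (i : ℕ) := by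
    have := bitRev_bitRev n i
    exact congrArg Fin.val this
  rw [hrev, Matrix.one_apply]
  by_cases h : (j : ℕ) = (i : ℕ)
  · rw [if_pos h, if_pos (Fin.ext h.symm)]
  · rw [if_neg h, if_neg (fun hh => h (congrArg Fin.val hh.symm))]

lemma G2_mul_self : G2 * G2 = 1 := by
  unfold G2
  ext i j
  fin_cases i <;> fin_cases j <;>
    simp [Matrix.mul_apply, Fin.sum_univ_two, Matrix.one_apply] <;> decide

lemma kronPow_mul_self (n : ℕ) : kronPow n * kronPow n = 1 := by
  induction n with
  | zero => simp [kronPow]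
  | succ n ih =>
    show (Matrix.reindex (finPowEquiv n) (finPowEquiv n) (Matrix.kroneckerMap (· * ·) G2 (kronPow n))) *
      (Matrix.reindex (finPowEquiv n) (finPowEquiv n) (Matrix.kroneckerMap (· * ·) G2 (kronPow n))) = 1
    rw [Matrix.reindex_apply, Matrix.submatrix_mul_equiv,
      ← Matrix.mul_kronecker_mul, ih, G2_mul_self, Matrix.one_kronecker_one,
      Matrix.submatrix_one_equiv]

lemma polarH_mul (n : ℕ) : polarH n * (kronPow n * bitRevMatrix n) = 1 := by
  unfold polarH
  rw [Matrix.mul_assoc, ← Matrix.mul_assoc (kronPow n), kronPow_mul_self, Matrix.one_mul,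
    bitRevMatrix_mul_self]

lemma polarEnc_bijective (n : ℕ) : Function.Bijective (polarEnc n) := by
  rw [Fintype.bijective_iff_injective_and_card]
  refine ⟨?_, rfl⟩
  intro u v huv
  have h : ∀ w : Fin (2^n) → ZMod 2,
      Matrix.vecMul (polarEnc n w) (kronPow n * bitRevMatrix n) = w := by
    intro w
    unfold polarEnc
    rw [Matrix.vecMul_vecMul, polarH_mul, Matrix.vecMul_one]
  rw [← h u, ← h v, huv]

-- ## Part 2 : basic probability lemmas

def Wprod (D : ℝ) (n : ℕ) (y u : Fin (2 ^ n) → ZMod 2) : ℝ :=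
  ∏ j, bsc D (y j) (polarEnc n u j)

lemma zmod2_eq (z : ZMod 2) : z = 0 ∨ z = 1 := (by decide : ∀ z : ZMod 2, z = 0 ∨ z = 1) z

lemma sum_zmod2 (f : ZMod 2 → ℝ) : ∑ z : ZMod 2, f z = f 0 + f 1 := by
  rw [show (univ : Finset (ZMod 2)) = {0, 1} by decide]
  rw [Finset.sum_insert (by decide), Finset.sum_singleton]

lemma bsc_pos {D : ℝ} (hD0 : 0 < D) (hD1 : D < 1) (y x : ZMod 2) : 0 < bsc D y x := by
  unfold bsc; split <;> linarith

lemma bsc_nonneg {D : ℝ} (hD0 : 0 < D) (hD1 : D < 1) (y x : ZMod 2) : 0 ≤ bsc D y x :=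
  (bsc_pos hD0 hD1 y x).le

lemma sum_bsc_left (D : ℝ) (x : ZMod 2) : ∑ y : ZMod 2, bsc D y x = 1 := by
  rw [sum_zmod2]
  rcases zmod2_eq x with h | h <;> subst h <;> simp [bsc] <;> ring

lemma sum_bsc_right (D : ℝ) (y : ZMod 2) : ∑ x : ZMod 2, bsc D y x = 1 := by
  rw [sum_zmod2]
  rcases zmod2_eq y with h | h <;> subst h <;> simp [bsc] <;> ring

lemma sum_fun_prod (n : ℕ) (g : Fin (2 ^ n) → ZMod 2 → ℝ) :
    ∑ x : Fin (2 ^ n) → ZMod 2, ∏ j, g j (x j) = ∏ j, ∑ b : ZMod 2, g j b := by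
  rw [← Fintype.piFinset_univ, Finset.sum_prod_piFinset]

lemma Wprod_pos {D : ℝ} (hD0 : 0 < D) (hD1 : D < 1) (n : ℕ) (y u : Fin (2 ^ n) → ZMod 2) :
    0 < Wprod D n y u :=
  Finset.prod_pos fun j _ => bsc_pos hD0 hD1 _ _

lemma sum_y_Wprod (D : ℝ) (n : ℕ) (u : Fin (2 ^ n) → ZMod 2) :
    ∑ y : Fin (2 ^ n) → ZMod 2, Wprod D n y u = 1 := by
  unfold Wprod
  rw [sum_fun_prod n (fun j b => bsc D b (polarEnc n u j))]
  simp [sum_bsc_left]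

lemma sum_u_Wprod (D : ℝ) (n : ℕ) (y : Fin (2 ^ n) → ZMod 2) :
    ∑ u : Fin (2 ^ n) → ZMod 2, Wprod D n y u = 1 := by
  unfold Wprod
  rw [Fintype.sum_bijective (polarEnc n) (polarEnc_bijective n) _
    (fun x => ∏ j, bsc D (y j) (x j)) (fun u => rfl)]
  rw [sum_fun_prod n (fun j b => bsc D (y j) b)]
  simp [sum_bsc_right]


/-- `W^{(i)}(ȳ, u₀^{i−1} ∣ u_i)`; it depends on `u` only through coordinates `≤ i`,
the coordinates `> i` being summed out. -/
def Wi (D : ℝ) (n : ℕ) (y : Fin (2 ^ n) → ZMod 2) (i : Fin (2 ^ n))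
    (u : Fin (2 ^ n) → ZMod 2) : ℝ :=
  ((2 : ℝ) ^ (2 ^ n - 1))⁻¹ *
    ∑ v ∈ Finset.univ.filter (fun v : Fin (2 ^ n) → ZMod 2 => ∀ j, j ≤ i → v j = u j),
      ∏ j, bsc D (y j) (polarEnc n v j)

/-- The posterior `P(u_i ∣ u₀^{i−1}, ȳ)`. -/
def post (D : ℝ) (n : ℕ) (y : Fin (2 ^ n) → ZMod 2) (i : Fin (2 ^ n))
    (u : Fin (2 ^ n) → ZMod 2) : ℝ :=
  Wi D n y i u /
    (Wi D n y i (Function.update u i 0) + Wi D n y i (Function.update u i 1))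

/-- The Bhattacharyya parameter `Z^{(i)}`; pasts are represented by words vanishing from
coordinate `i` on. -/
def Zi (D : ℝ) (n : ℕ) (i : Fin (2 ^ n)) : ℝ :=
  ∑ y : Fin (2 ^ n) → ZMod 2,
    ∑ u ∈ Finset.univ.filter (fun u : Fin (2 ^ n) → ZMod 2 => ∀ j, i ≤ j → u j = 0),
      Real.sqrt (Wi D n y i u * Wi D n y i (Function.update u i 1))

/-- The average distortion $D_N(F, ũ_F)$ of the Standard Model. -/
def avgDist (D : ℝ) (n : ℕ) (F : Finset (Fin (2 ^ n))) (ut : Fin (2 ^ n) → ZMod 2) : ℝ :=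
  ∑ y : Fin (2 ^ n) → ZMod 2, ((2 : ℝ) ^ (2 ^ n))⁻¹ *
    ∑ u ∈ Finset.univ.filter (fun u : Fin (2 ^ n) → ZMod 2 => ∀ i ∈ F, u i = ut i),
      (∏ i ∈ Fᶜ, post D n y i u) * (hammingDist y (polarEnc n u) : ℝ)

-- ## Part 3 : the S machinery

lemma filterU_congr {α : Type*} [Fintype α] {p q : α → Prop} [DecidablePred p] [DecidablePred q]
    (h : ∀ x, p x ↔ q x) : Finset.univ.filter p = Finset.univ.filter q := by
  ext x
  simp only [Finset.mem_filter, Finset.mem_univ, true_and]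
  exact h x

/-- Sum of `Wprod` over words agreeing with `u` on coordinates `≤ i`. -/
def SI (D : ℝ) (n : ℕ) (y : Fin (2 ^ n) → ZMod 2) (i : Fin (2 ^ n))
    (u : Fin (2 ^ n) → ZMod 2) : ℝ :=
  ∑ v ∈ Finset.univ.filter (fun v : Fin (2 ^ n) → ZMod 2 => ∀ j, j ≤ i → v j = u j),
    Wprod D n y v

/-- Sum of `Wprod` over words agreeing with `u` on coordinates `< k`. -/
def SS (D : ℝ) (n : ℕ) (y : Fin (2 ^ n) → ZMod 2) (k : ℕ)
    (u : Fin (2 ^ n) → ZMod 2) : ℝ :=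
  ∑ v ∈ Finset.univ.filter (fun v : Fin (2 ^ n) → ZMod 2 => ∀ j : Fin (2 ^ n), (j : ℕ) < k → v j = u j),
    Wprod D n y v

lemma Wi_eq_SI (D : ℝ) (n : ℕ) (y : Fin (2 ^ n) → ZMod 2) (i : Fin (2 ^ n))
    (u : Fin (2 ^ n) → ZMod 2) :
    Wi D n y i u = ((2 : ℝ) ^ (2 ^ n - 1))⁻¹ * SI D n y i u := rfl

variable {D : ℝ} {n : ℕ}

lemma SI_pos (hD0 : 0 < D) (hD1 : D < 1) (y : Fin (2 ^ n) → ZMod 2) (i : Fin (2 ^ n))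
    (u : Fin (2 ^ n) → ZMod 2) : 0 < SI D n y i u := by
  apply Finset.sum_pos (fun v _ => Wprod_pos hD0 hD1 n y v)
  exact ⟨u, Finset.mem_filter.mpr ⟨Finset.mem_univ u, fun j _ => rfl⟩⟩

lemma SS_pos (hD0 : 0 < D) (hD1 : D < 1) (y : Fin (2 ^ n) → ZMod 2) (k : ℕ)
    (u : Fin (2 ^ n) → ZMod 2) : 0 < SS D n y k u := by
  apply Finset.sum_pos (fun v _ => Wprod_pos hD0 hD1 n y v)
  exact ⟨u, Finset.mem_filter.mpr ⟨Finset.mem_univ u, fun j _ => rfl⟩⟩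

lemma Wi_pos (hD0 : 0 < D) (hD1 : D < 1) (y : Fin (2 ^ n) → ZMod 2) (i : Fin (2 ^ n))
    (u : Fin (2 ^ n) → ZMod 2) : 0 < Wi D n y i u := by
  rw [Wi_eq_SI]
  exact mul_pos (by positivity) (SI_pos hD0 hD1 y i u)

lemma SI_congr (y : Fin (2 ^ n) → ZMod 2) (i : Fin (2 ^ n)) {u u' : Fin (2 ^ n) → ZMod 2}
    (h : ∀ k, k ≤ i → u k = u' k) : SI D n y i u = SI D n y i u' := by
  unfold SI
  refine Finset.sum_congr (filterU_congr fun v => ?_) (fun _ _ => rfl)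
  exact ⟨fun hv j hj => (hv j hj).trans (h j hj), fun hv j hj => (hv j hj).trans (h j hj).symm⟩

lemma SS_congr (y : Fin (2 ^ n) → ZMod 2) (k : ℕ) {u u' : Fin (2 ^ n) → ZMod 2}
    (h : ∀ j : Fin (2 ^ n), (j : ℕ) < k → u j = u' j) : SS D n y k u = SS D n y k u' := by
  unfold SS
  refine Finset.sum_congr (filterU_congr fun v => ?_) (fun _ _ => rfl)
  exact ⟨fun hv j hj => (hv j hj).trans (h j hj), fun hv j hj => (hv j hj).trans (h j hj).symm⟩

lemma Wi_congr (y : Fin (2 ^ n) → ZMod 2) (i : Fin (2 ^ n)) {u u' : Fin (2 ^ n) → ZMod 2}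
    (h : ∀ k, k ≤ i → u k = u' k) : Wi D n y i u = Wi D n y i u' := by
  rw [Wi_eq_SI, Wi_eq_SI, SI_congr y i h]

/-- `SI i u` equals `SS (i+1)`. -/
lemma SI_eq_SS (y : Fin (2 ^ n) → ZMod 2) (i : Fin (2 ^ n)) (u : Fin (2 ^ n) → ZMod 2) :
    SI D n y i u = SS D n y ((i : ℕ) + 1) u := by
  unfold SI SS
  refine Finset.sum_congr (filterU_congr fun v => ?_) (fun _ _ => rfl)
  constructor
  · intro hv j hj
    exact hv j (by rw [Fin.le_def]; omega)
  · intro hv j hj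
    exact hv j (by rw [Fin.le_def] at hj; omega)

lemma update_self_zmod {n : ℕ} (u : Fin (2 ^ n) → ZMod 2) (i : Fin (2 ^ n)) (h : u i = 0) :
    Function.update u i 0 = u := by
  rw [← h]; exact Function.update_eq_self i u

/-- Splitting `SS i` according to the value of the `i`-th coordinate. -/
lemma SS_split (y : Fin (2 ^ n) → ZMod 2) (i : Fin (2 ^ n)) (u : Fin (2 ^ n) → ZMod 2) :
    SS D n y (i : ℕ) u
      = SI D n y i (Function.update u i 0) + SI D n y i (Function.update u i 1) := by
  unfold SS SI
  rw [← Finset.sum_filter_add_sum_filter_not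
    (Finset.univ.filter (fun v : Fin (2 ^ n) → ZMod 2 => ∀ j : Fin (2 ^ n), (j : ℕ) < (i : ℕ) → v j = u j))
    (fun v => v i = 0)]
  have key : ∀ b : ZMod 2,
      (Finset.univ.filter (fun v : Fin (2 ^ n) → ZMod 2 => ∀ j : Fin (2 ^ n), (j : ℕ) < (i : ℕ) → v j = u j)).filter
        (fun v => v i = b)
      = Finset.univ.filter (fun v : Fin (2 ^ n) → ZMod 2 => ∀ j, j ≤ i → v j = Function.update u i b j) := by
    intro b
    rw [Finset.filter_filter]
    apply filterU_congr
    intro v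
    constructor
    · rintro ⟨h1, h2⟩ j hj
      rcases eq_or_lt_of_le hj with he | hlt
      · subst he
        rw [Function.update_self]
        exact h2
      · rw [Function.update_of_ne (ne_of_lt hlt)]
        exact h1 j (Fin.lt_def.mp hlt)
    · intro h
      constructor
      · intro j hj
        have hji : j ≤ i := le_of_lt (Fin.lt_def.mpr hj)
        have := h j hji
        rwa [Function.update_of_ne (by intro hh; subst hh; omega)] at this
      · have := h i le_rfl
        rwa [Function.update_self] at this
  have hv2 : ∀ z : ZMod 2, ¬ z = 0 ↔ z = 1 := by decide
  rw [key 0, show (Finset.univ.filter (fun v : Fin (2 ^ n) → ZMod 2 => ∀ j : Fin (2 ^ n), (j : ℕ) < (i : ℕ) → v j = u j)).filter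
        (fun v => ¬ v i = 0) = (Finset.univ.filter (fun v : Fin (2 ^ n) → ZMod 2 => ∀ j : Fin (2 ^ n), (j : ℕ) < (i : ℕ) → v j = u j)).filter
        (fun v => v i = 1) from Finset.filter_congr (fun v _ => by rw [hv2]), key 1]

/-- The posterior in terms of the `SI`/`SS` sums. -/
lemma post_eq_SI (y : Fin (2 ^ n) → ZMod 2) (i : Fin (2 ^ n)) (u : Fin (2 ^ n) → ZMod 2) :
    post D n y i u = SI D n y i u / SS D n y (i : ℕ) u := by
  unfold post
  rw [Wi_eq_SI, Wi_eq_SI, Wi_eq_SI, SS_split y i u, ← mul_add]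
  rw [mul_div_mul_left _ _ (by positivity : ((2 : ℝ) ^ (2 ^ n - 1))⁻¹ ≠ 0)]

lemma post_pos (hD0 : 0 < D) (hD1 : D < 1) (y : Fin (2 ^ n) → ZMod 2) (i : Fin (2 ^ n))
    (u : Fin (2 ^ n) → ZMod 2) : 0 < post D n y i u := by
  rw [post_eq_SI]
  exact div_pos (SI_pos hD0 hD1 y i u) (SS_pos hD0 hD1 y (i : ℕ) u)

lemma post_congr (y : Fin (2 ^ n) → ZMod 2) (i : Fin (2 ^ n)) {u u' : Fin (2 ^ n) → ZMod 2}
    (h : ∀ k, k ≤ i → u k = u' k) : post D n y i u = post D n y i u' := by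
  rw [post_eq_SI, post_eq_SI, SI_congr y i h,
    SS_congr y (i : ℕ) (fun j hj => h j (by rw [Fin.le_def]; omega))]

lemma post_add_one (hD0 : 0 < D) (hD1 : D < 1) (y : Fin (2 ^ n) → ZMod 2) (i : Fin (2 ^ n))
    (u : Fin (2 ^ n) → ZMod 2) :
    post D n y i (Function.update u i 0) + post D n y i (Function.update u i 1) = 1 := by
  have h0 : SS D n y (i : ℕ) (Function.update u i 0) = SS D n y (i : ℕ) u :=
    SS_congr y (i : ℕ) (fun j hj => Function.update_of_ne (by intro hh; subst hh; omega) _ _)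
  have h1 : SS D n y (i : ℕ) (Function.update u i 1) = SS D n y (i : ℕ) u :=
    SS_congr y (i : ℕ) (fun j hj => Function.update_of_ne (by intro hh; subst hh; omega) _ _)
  have hsi : ∀ b : ZMod 2, SI D n y i (Function.update (Function.update u i b) i 0)
      = SI D n y i (Function.update u i 0) := by
    intro b
    apply SI_congr
    intro k hk
    by_cases hki : k = i
    · subst hki; rw [Function.update_self, Function.update_self]
    · rw [Function.update_of_ne hki, Function.update_of_ne hki, Function.update_of_ne hki]
  have hsi1 : ∀ b : ZMod 2, SI D n y i (Function.update (Function.update u i b) i 1)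
      = SI D n y i (Function.update u i 1) := by
    intro b
    apply SI_congr
    intro k hk
    by_cases hki : k = i
    · subst hki; rw [Function.update_self, Function.update_self]
    · rw [Function.update_of_ne hki, Function.update_of_ne hki, Function.update_of_ne hki]
  rw [post_eq_SI, post_eq_SI, h0, h1, ← add_div, ← SS_split y i u]
  exact div_self (ne_of_gt (SS_pos hD0 hD1 y (i : ℕ) u))




-- ## Part 4 : telescoping and summing out top coordinates

/-- Chain rule: the product of the first `k` posteriors equals `SS k`. -/
lemma prod_post_eq_SS (hD0 : 0 < D) (hD1 : D < 1) (y : Fin (2 ^ n) → ZMod 2) :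
    ∀ k : ℕ, k ≤ 2 ^ n → ∀ u : Fin (2 ^ n) → ZMod 2,
      ∏ j ∈ Finset.univ.filter (fun j : Fin (2 ^ n) => (j : ℕ) < k), post D n y j u
        = SS D n y k u := by
  intro k
  induction k with
  | zero =>
    intro _ u
    rw [Finset.filter_false_of_mem (fun j _ => by omega), Finset.prod_empty]
    unfold SS
    rw [Finset.filter_true_of_mem (fun v _ => fun j hj => absurd hj (by omega)),
      sum_u_Wprod D n y]
  | succ k ih =>
    intro hk u
    have hkN : k < 2 ^ n := by omega
    set m : Fin (2 ^ n) := ⟨k, hkN⟩ with hm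
    have hsplit : Finset.univ.filter (fun j : Fin (2 ^ n) => (j : ℕ) < k + 1)
        = insert m (Finset.univ.filter (fun j : Fin (2 ^ n) => (j : ℕ) < k)) := by
      ext j
      simp only [Finset.mem_insert, Finset.mem_filter, Finset.mem_univ, true_and]
      constructor
      · intro hj
        rcases Nat.lt_succ_iff_lt_or_eq.mp hj with hh | hh
        · exact Or.inr hh
        · exact Or.inl (Fin.ext hh)
      · rintro (rfl | hj)
        · exact Nat.lt_succ_self k
        · omega
    rw [hsplit, Finset.prod_insert (by simp [hm]), ih (by omega) u, post_eq_SI]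
    have : (m : ℕ) = k := rfl
    rw [this]
    rw [div_mul_cancel₀ _ (ne_of_gt (SS_pos hD0 hD1 y k u)), SI_eq_SS, this]

/-- Product of all posteriors is the likelihood. -/
lemma prod_post_eq_Wprod (hD0 : 0 < D) (hD1 : D < 1) (y u : Fin (2 ^ n) → ZMod 2) :
    ∏ j, post D n y j u = Wprod D n y u := by
  have h := prod_post_eq_SS hD0 hD1 y (2 ^ n) le_rfl u
  rw [Finset.filter_true_of_mem (fun j _ => j.isLt)] at h
  rw [h]
  unfold SS
  rw [show Finset.univ.filter
        (fun v : Fin (2 ^ n) → ZMod 2 => ∀ j : Fin (2 ^ n), (j : ℕ) < 2 ^ n → v j = u j)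
      = {u} from ?_, Finset.sum_singleton]
  ext v
  simp only [Finset.mem_filter, Finset.mem_univ, true_and, Finset.mem_singleton]
  constructor
  · intro hv
    funext j
    exact hv j j.isLt
  · rintro rfl j _
    rfl

/-- Words vanishing from coordinate `t` (as a natural number bound) on. -/
def BT (n t : ℕ) : Finset (Fin (2 ^ n) → ZMod 2) :=
  Finset.univ.filter (fun u : Fin (2 ^ n) → ZMod 2 => ∀ j : Fin (2 ^ n), t ≤ (j : ℕ) → u j = 0)

lemma mem_BT {n t : ℕ} {u : Fin (2 ^ n) → ZMod 2} :
    u ∈ BT n t ↔ ∀ j : Fin (2 ^ n), t ≤ (j : ℕ) → u j = 0 := by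
  simp [BT]

lemma BT_top (n : ℕ) : BT n (2 ^ n) = Finset.univ := by
  apply Finset.filter_true_of_mem
  intro u _ j hj
  exact absurd hj (by omega)

/-- Pairing a word with its flip at coordinate `t`. -/
lemma sum_BT_succ {n : ℕ} (t : ℕ) (ht : t < 2 ^ n) (f : (Fin (2 ^ n) → ZMod 2) → ℝ) :
    ∑ u ∈ BT n (t + 1), f u
      = ∑ u ∈ BT n t, (f u + f (Function.update u ⟨t, ht⟩ 1)) := by
  set m : Fin (2 ^ n) := ⟨t, ht⟩ with hm
  have hBT0 : ∀ u ∈ BT n t, u m = 0 := fun u hu => (mem_BT.mp hu) m (le_refl t)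
  have himg : ∀ u ∈ BT n t, Function.update u m 1 m = (1 : ZMod 2) := fun u _ =>
    Function.update_self m 1 u
  have hdisj : Disjoint (BT n t) ((BT n t).image (fun u => Function.update u m 1)) := by
    rw [Finset.disjoint_left]
    intro u hu hui
    rcases Finset.mem_image.mp hui with ⟨w, hw, hwu⟩
    have h1 : u m = 1 := by rw [← hwu]; exact himg w hw
    rw [hBT0 u hu] at h1
    exact absurd h1 (by decide)
  have hunion : BT n (t + 1) = BT n t ∪ (BT n t).image (fun u => Function.update u m 1) := by
    ext u
    rw [Finset.mem_union, Finset.mem_image, mem_BT]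
    constructor
    · intro hu
      rcases zmod2_eq (u m) with h0 | h1
      · left
        rw [mem_BT]
        intro j hj
        rcases Nat.eq_or_lt_of_le hj with he | hlt
        · have : j = m := Fin.ext he.symm
          rw [this]; exact h0
        · exact hu j hlt
      · right
        refine ⟨Function.update u m 0, ?_, ?_⟩
        · rw [mem_BT]
          intro j hj
          by_cases hjm : j = m
          · subst hjm; exact Function.update_self _ _ _
          · have hj' : t + 1 ≤ (j : ℕ) := by
              rcases Nat.eq_or_lt_of_le hj with he | hlt
              · exact absurd (Fin.ext he.symm : j = m) hjm
              · omega
            rw [Function.update_of_ne hjm]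
            exact hu j hj'
        · funext j
          by_cases hjm : j = m
          · subst hjm; rw [Function.update_self, h1]
          · rw [Function.update_of_ne hjm, Function.update_of_ne hjm]
    · rintro (hu | ⟨w, hw, rfl⟩)
      · intro j hj
        exact (mem_BT.mp hu) j (by omega)
      · intro j hj
        rw [Function.update_of_ne (by intro hh; subst hh; simp [hm] at hj)]
        exact (mem_BT.mp hw) j (by omega)
  rw [hunion, Finset.sum_union hdisj, Finset.sum_image, Finset.sum_add_distrib]
  intro x hx y hy hxy
  funext j
  by_cases hjm : j = m
  · subst hjm; rw [hBT0 x hx, hBT0 y hy]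
  · have := congrFun hxy j
    simp only [Function.update_of_ne hjm] at this; exact this

/-- Summing out the coordinates above `m` against a normalized factor system. -/
lemma sum_out_top {n : ℕ} (m : Fin (2 ^ n)) (c : Fin (2 ^ n) → (Fin (2 ^ n) → ZMod 2) → ℝ)
    (hdep : ∀ j (u u' : Fin (2 ^ n) → ZMod 2), (∀ k, k ≤ j → u k = u' k) → c j u = c j u')
    (hsum : ∀ j (u : Fin (2 ^ n) → ZMod 2),
      c j (Function.update u j 0) + c j (Function.update u j 1) = 1)
    (h : (Fin (2 ^ n) → ZMod 2) → ℝ)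
    (hh : ∀ (u u' : Fin (2 ^ n) → ZMod 2), (∀ k, k ≤ m → u k = u' k) → h u = h u') :
    ∀ t : ℕ, (m : ℕ) + 1 ≤ t → t ≤ 2 ^ n →
      ∑ u ∈ BT n t,
        (∏ j ∈ Finset.univ.filter (fun j : Fin (2 ^ n) => j ≠ m ∧ (j : ℕ) < t), c j u) * h u
      = ∑ u ∈ BT n ((m : ℕ) + 1),
          (∏ j ∈ Finset.univ.filter (fun j : Fin (2 ^ n) => (j : ℕ) < (m : ℕ)), c j u) * h u := by
  intro t
  induction t with
  | zero => intro h1 _; omega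
  | succ t ih =>
    intro h1 h2
    rcases Nat.eq_or_lt_of_le h1 with he | hlt
    · -- base case t + 1 = m + 1
      have htm : t = (m : ℕ) := by omega
      subst htm
      apply Finset.sum_congr rfl
      intro u _
      congr 1
      refine Finset.prod_congr (filterU_congr fun j => ?_) (fun _ _ => rfl)
      constructor
      · rintro ⟨hjm, hjt⟩
        rcases Nat.lt_succ_iff_lt_or_eq.mp hjt with hh' | hh'
        · exact hh'
        · exact absurd (Fin.ext hh') hjm
      · intro hj
        exact ⟨by intro hh'; subst hh'; omega, by omega⟩
    · -- inductive step : t > m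
      have hmt : (m : ℕ) + 1 ≤ t := by omega
      have htN : t < 2 ^ n := by omega
      set mt : Fin (2 ^ n) := ⟨t, htN⟩ with hmt'
      have hmtv : (mt : ℕ) = t := rfl
      rw [sum_BT_succ t htN]
      rw [← ih hmt (by omega)]
      apply Finset.sum_congr rfl
      intro u hu
      have hu0 : u mt = 0 := (mem_BT.mp hu) mt le_rfl
      have hsplit : Finset.univ.filter (fun j : Fin (2 ^ n) => j ≠ m ∧ (j : ℕ) < t + 1)
          = insert mt (Finset.univ.filter (fun j : Fin (2 ^ n) => j ≠ m ∧ (j : ℕ) < t)) := by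
        ext j
        simp only [Finset.mem_insert, Finset.mem_filter, Finset.mem_univ, true_and]
        constructor
        · rintro ⟨hjm, hjt⟩
          rcases Nat.lt_succ_iff_lt_or_eq.mp hjt with hh' | hh'
          · exact Or.inr ⟨hjm, hh'⟩
          · exact Or.inl (Fin.ext hh')
        · rintro (rfl | ⟨hjm, hjt⟩)
          · exact ⟨by intro hh'; subst hh'; omega, by omega⟩
          · exact ⟨hjm, by omega⟩
      have hnotmem : mt ∉ Finset.univ.filter (fun j : Fin (2 ^ n) => j ≠ m ∧ (j : ℕ) < t) := by
        simp only [Finset.mem_filter, Finset.mem_univ, true_and, not_and]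
        intro _
        omega
      have hprod_eq : ∀ b : ZMod 2,
          ∏ j ∈ Finset.univ.filter (fun j : Fin (2 ^ n) => j ≠ m ∧ (j : ℕ) < t),
            c j (Function.update u mt b)
          = ∏ j ∈ Finset.univ.filter (fun j : Fin (2 ^ n) => j ≠ m ∧ (j : ℕ) < t), c j u := by
        intro b
        apply Finset.prod_congr rfl
        intro j hj
        rcases Finset.mem_filter.mp hj with ⟨_, _, hjt⟩
        apply hdep
        intro k hk
        rw [Function.update_of_ne]
        intro hh'
        subst hh'
        rw [Fin.le_def] at hk
        omega
      have hh_eq : h (Function.update u mt 1) = h u := by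
        apply hh
        intro k hk
        rw [Function.update_of_ne]
        intro hh'
        subst hh'
        rw [Fin.le_def] at hk
        omega
      rw [hsplit, Finset.prod_insert hnotmem, Finset.prod_insert hnotmem]
      rw [hprod_eq 1, hh_eq]
      have hc : c mt u + c mt (Function.update u mt 1) = 1 := by
        have := hsum mt u
        rwa [update_self_zmod u mt hu0] at this
      linear_combination ((∏ j ∈ Finset.univ.filter (fun j : Fin (2 ^ n) => j ≠ m ∧ (j : ℕ) < t), c j u) * h u) * hc


-- ## Part 5 : the Bhattacharyya bound

lemma Zi_eq_BT (D : ℝ) (n : ℕ) (i : Fin (2 ^ n)) :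
    Zi D n i = ∑ y : Fin (2 ^ n) → ZMod 2, ∑ u ∈ BT n (i : ℕ),
      Real.sqrt (Wi D n y i u * Wi D n y i (Function.update u i 1)) := by
  unfold Zi BT
  apply Finset.sum_congr rfl
  intro y _
  refine Finset.sum_congr (filterU_congr fun u => ?_) (fun _ _ => rfl)
  constructor
  · intro h j hj
    exact h j (Fin.le_def.mpr hj)
  · intro h j hj
    exact h j (Fin.le_def.mp hj)

lemma sum_SS_BT (hD0 : 0 < D) (hD1 : D < 1) (y : Fin (2 ^ n) → ZMod 2) (i : Fin (2 ^ n)) :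
    ∑ u ∈ BT n (i : ℕ), SS D n y (i : ℕ) u = 1 := by
  have key : ∀ u ∈ BT n (i : ℕ), SS D n y (i : ℕ) u
      = ∑ v ∈ Finset.univ.filter (fun v : Fin (2 ^ n) → ZMod 2 =>
          (fun w : Fin (2 ^ n) → ZMod 2 => fun j : Fin (2 ^ n) => if (j : ℕ) < (i : ℕ) then w j else 0) v = u),
        Wprod D n y v := by
    intro u hu
    unfold SS
    refine Finset.sum_congr (filterU_congr fun v => ?_) (fun _ _ => rfl)
    constructor
    · intro h
      funext j
      show (if (j : ℕ) < (i : ℕ) then v j else 0) = u j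
      by_cases hj : (j : ℕ) < (i : ℕ)
      · rw [if_pos hj]; exact h j hj
      · rw [if_neg hj]; exact ((mem_BT.mp hu) j (by omega)).symm
    · intro h j hj
      have h2 : (if (j : ℕ) < (i : ℕ) then v j else 0) = u j := congrFun h j
      rwa [if_pos hj] at h2
  rw [Finset.sum_congr rfl key]
  rw [Finset.sum_fiberwise_of_maps_to (fun v _ => mem_BT.mpr (fun j hj =>
    if_neg (by omega : ¬ (j : ℕ) < (i : ℕ))))]
  exact sum_u_Wprod D n y

lemma norm_Wi_BT (hD0 : 0 < D) (hD1 : D < 1) (i : Fin (2 ^ n)) :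
    ∑ y : Fin (2 ^ n) → ZMod 2, ∑ u ∈ BT n (i : ℕ),
      (Wi D n y i u + Wi D n y i (Function.update u i 1)) = 2 := by
  have key : ∀ y, ∀ u ∈ BT n (i : ℕ),
      Wi D n y i u + Wi D n y i (Function.update u i 1)
      = ((2 : ℝ) ^ (2 ^ n - 1))⁻¹ * SS D n y (i : ℕ) u := by
    intro y u hu
    have hu0 : u i = 0 := (mem_BT.mp hu) i le_rfl
    rw [Wi_eq_SI, Wi_eq_SI, ← mul_add, SS_split y i u, update_self_zmod u i hu0]
  have : ∀ y : Fin (2 ^ n) → ZMod 2, ∑ u ∈ BT n (i : ℕ),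
      (Wi D n y i u + Wi D n y i (Function.update u i 1)) = ((2 : ℝ) ^ (2 ^ n - 1))⁻¹ := by
    intro y
    rw [Finset.sum_congr rfl (key y), ← Finset.mul_sum, sum_SS_BT hD0 hD1 y i, mul_one]
  rw [Finset.sum_congr rfl (fun y _ => this y), Finset.sum_const]
  rw [Finset.card_univ, Fintype.card_fun]
  simp only [Fintype.card_fin, ZMod.card, nsmul_eq_mul]
  have h1 : (2 : ℕ) ^ (2 ^ n) = 2 ^ (2 ^ n - 1) * 2 := by
    rw [← pow_succ]
    congr 1
    have : 1 ≤ 2 ^ n := Nat.one_le_two_pow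
    omega
  rw [h1]
  push_cast
  rw [mul_comm ((2 : ℝ) ^ (2 ^ n - 1)) 2, mul_assoc, mul_inv_cancel₀ (by positivity)]
  norm_num

/-- The half-L1 distance at a frozen index is at most `2δ`. -/
lemma Ei_le (hD0 : 0 < D) (hD1 : D < 1) {δ : ℝ} (hδ : 0 ≤ δ) (i : Fin (2 ^ n))
    (hZ : 1 - 2 * δ ^ 2 ≤ Zi D n i) :
    ∑ y : Fin (2 ^ n) → ZMod 2, ∑ u ∈ BT n (i : ℕ),
      |Wi D n y i u - Wi D n y i (Function.update u i 1)| / 2 ≤ 2 * δ := by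
  classical
  set s : Finset ((Fin (2 ^ n) → ZMod 2) × (Fin (2 ^ n) → ZMod 2)) :=
    Finset.univ ×ˢ BT n (i : ℕ) with hs
  set A : (Fin (2 ^ n) → ZMod 2) × (Fin (2 ^ n) → ZMod 2) → ℝ :=
    fun p => Wi D n p.1 i p.2 with hA
  set B : (Fin (2 ^ n) → ZMod 2) × (Fin (2 ^ n) → ZMod 2) → ℝ :=
    fun p => Wi D n p.1 i (Function.update p.2 i 1) with hB
  have hApos : ∀ p, 0 < A p := fun p => Wi_pos hD0 hD1 _ _ _
  have hBpos : ∀ p, 0 < B p := fun p => Wi_pos hD0 hD1 _ _ _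
  have hsum1 : ∑ p ∈ s, (A p + B p) = 2 := by
    rw [hs, Finset.sum_product]
    exact norm_Wi_BT hD0 hD1 i
  have hZs : Zi D n i = ∑ p ∈ s, Real.sqrt (A p * B p) := by
    rw [Zi_eq_BT, hs, Finset.sum_product]
  have hEs : ∑ y : Fin (2 ^ n) → ZMod 2, ∑ u ∈ BT n (i : ℕ),
      |Wi D n y i u - Wi D n y i (Function.update u i 1)| / 2
      = ∑ p ∈ s, |A p - B p| / 2 := by
    rw [hs, Finset.sum_product]
  rw [hEs]
  set e : ℝ := ∑ p ∈ s, |A p - B p| / 2 with he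
  set Z : ℝ := Zi D n i with hZdef
  have henonneg : 0 ≤ e := Finset.sum_nonneg fun p _ => by positivity
  have hZnonneg : 0 ≤ Z := by
    rw [hZs]
    exact Finset.sum_nonneg fun p _ => Real.sqrt_nonneg _
  have hfg : ∀ p, |A p - B p| / 2
      = Real.sqrt ((A p + B p) / 2) * Real.sqrt ((A p - B p) ^ 2 / (2 * (A p + B p))) := by
    intro p
    have hABpos : 0 < A p + B p := by have := hApos p; have := hBpos p; linarith
    rw [← Real.sqrt_mul (by positivity)]
    have : (A p + B p) / 2 * ((A p - B p) ^ 2 / (2 * (A p + B p)))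
        = (A p - B p) ^ 2 / 4 := by field_simp; ring
    rw [this, show (A p - B p) ^ 2 / 4 = ((A p - B p) / 2) ^ 2 by ring, Real.sqrt_sq_eq_abs,
      abs_div]
    norm_num
  have hfg2 : ∀ p, Real.sqrt (A p * B p)
      = Real.sqrt ((A p + B p) / 2) * Real.sqrt (2 * (A p * B p) / (A p + B p)) := by
    intro p
    have hABpos : 0 < A p + B p := by have := hApos p; have := hBpos p; linarith
    rw [← Real.sqrt_mul (by positivity)]
    congr 1
    field_simp
  have hsumf2 : ∑ p ∈ s, Real.sqrt ((A p + B p) / 2) ^ 2 = 1 := by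
    have : ∀ p, Real.sqrt ((A p + B p) / 2) ^ 2 = (A p + B p) / 2 := by
      intro p
      rw [Real.sq_sqrt (by have := hApos p; have := hBpos p; linarith)]
    rw [Finset.sum_congr rfl (fun p _ => this p), ← Finset.sum_div, hsum1]
    norm_num
  have cauchy1 : e ^ 2 ≤ ∑ p ∈ s, (A p - B p) ^ 2 / (2 * (A p + B p)) := by
    have h := Finset.sum_mul_sq_le_sq_mul_sq s
      (fun p => Real.sqrt ((A p + B p) / 2))
      (fun p => Real.sqrt ((A p - B p) ^ 2 / (2 * (A p + B p))))
    calc e ^ 2 = (∑ p ∈ s, |A p - B p| / 2) ^ 2 := by rw [he]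
      _ = (∑ p ∈ s, Real.sqrt ((A p + B p) / 2)
            * Real.sqrt ((A p - B p) ^ 2 / (2 * (A p + B p)))) ^ 2 := by
          rw [Finset.sum_congr rfl (fun p _ => hfg p)]
      _ ≤ (∑ p ∈ s, Real.sqrt ((A p + B p) / 2) ^ 2)
            * ∑ p ∈ s, Real.sqrt ((A p - B p) ^ 2 / (2 * (A p + B p))) ^ 2 := h
      _ = ∑ p ∈ s, Real.sqrt ((A p - B p) ^ 2 / (2 * (A p + B p))) ^ 2 := by
          rw [hsumf2, one_mul]
      _ = ∑ p ∈ s, (A p - B p) ^ 2 / (2 * (A p + B p)) := by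
          refine Finset.sum_congr rfl (fun p _ => ?_)
          rw [Real.sq_sqrt]
          have := hApos p; have := hBpos p
          positivity
  have cauchy2 : Z ^ 2 ≤ ∑ p ∈ s, 2 * (A p * B p) / (A p + B p) := by
    have h := Finset.sum_mul_sq_le_sq_mul_sq s
      (fun p => Real.sqrt ((A p + B p) / 2))
      (fun p => Real.sqrt (2 * (A p * B p) / (A p + B p)))
    calc Z ^ 2 = (∑ p ∈ s, Real.sqrt (A p * B p)) ^ 2 := by rw [hZs]
      _ = (∑ p ∈ s, Real.sqrt ((A p + B p) / 2)
            * Real.sqrt (2 * (A p * B p) / (A p + B p))) ^ 2 := by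
          rw [Finset.sum_congr rfl (fun p _ => hfg2 p)]
      _ ≤ (∑ p ∈ s, Real.sqrt ((A p + B p) / 2) ^ 2)
            * ∑ p ∈ s, Real.sqrt (2 * (A p * B p) / (A p + B p)) ^ 2 := h
      _ = ∑ p ∈ s, Real.sqrt (2 * (A p * B p) / (A p + B p)) ^ 2 := by
          rw [hsumf2, one_mul]
      _ = ∑ p ∈ s, 2 * (A p * B p) / (A p + B p) := by
          refine Finset.sum_congr rfl (fun p _ => ?_)
          rw [Real.sq_sqrt]
          have := hApos p; have := hBpos p
          positivity
  have hident : ∑ p ∈ s, (A p - B p) ^ 2 / (2 * (A p + B p))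
      = 1 - ∑ p ∈ s, 2 * (A p * B p) / (A p + B p) := by
    have : ∀ p ∈ s, (A p - B p) ^ 2 / (2 * (A p + B p))
        = (A p + B p) / 2 - 2 * (A p * B p) / (A p + B p) := by
      intro p _
      have hABpos : 0 < A p + B p := by have := hApos p; have := hBpos p; linarith
      field_simp
      ring
    rw [Finset.sum_congr rfl this, Finset.sum_sub_distrib, ← Finset.sum_div, hsum1]
    norm_num
  have hZle1 : Z ≤ 1 := by
    have hpt : ∀ p ∈ s, Real.sqrt (A p * B p) ≤ (A p + B p) / 2 := by
      intro p _
      have hApos' := hApos p; have hBpos' := hBpos p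
      rw [show (A p + B p) / 2 = Real.sqrt (((A p + B p) / 2) ^ 2) from
        (Real.sqrt_sq (by linarith)).symm]
      apply Real.sqrt_le_sqrt
      nlinarith [sq_nonneg (A p - B p)]
    calc Z = ∑ p ∈ s, Real.sqrt (A p * B p) := hZs
      _ ≤ ∑ p ∈ s, (A p + B p) / 2 := Finset.sum_le_sum hpt
      _ = 1 := by rw [← Finset.sum_div, hsum1]; norm_num
  have he2 : e ^ 2 ≤ 1 - Z ^ 2 := by
    calc e ^ 2 ≤ ∑ p ∈ s, (A p - B p) ^ 2 / (2 * (A p + B p)) := cauchy1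
      _ = 1 - ∑ p ∈ s, 2 * (A p * B p) / (A p + B p) := hident
      _ ≤ 1 - Z ^ 2 := by linarith [cauchy2]
  have hfinal : e ^ 2 ≤ (2 * δ) ^ 2 := by
    have h1Z : 1 - Z ≤ 2 * δ ^ 2 := by linarith [hZ]
    nlinarith [hZle1, hZnonneg]
  nlinarith [hfinal, henonneg, hδ]


-- ## Part 6 : hybrid measures

/-- Factor system: `1/2` on `G`, posterior elsewhere. -/
def cfac (D : ℝ) (n : ℕ) (G : Finset (Fin (2 ^ n))) (y : Fin (2 ^ n) → ZMod 2)
    (j : Fin (2 ^ n)) (u : Fin (2 ^ n) → ZMod 2) : ℝ :=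
  if j ∈ G then 1 / 2 else post D n y j u

/-- Expected normalized distortion under the hybrid measure. -/
def Phi (D : ℝ) (n : ℕ) (G : Finset (Fin (2 ^ n))) : ℝ :=
  ∑ y : Fin (2 ^ n) → ZMod 2, ((2 : ℝ) ^ (2 ^ n))⁻¹ *
    ∑ u : Fin (2 ^ n) → ZMod 2, (∏ j, cfac D n G y j u) *
      ((hammingDist y (polarEnc n u) : ℝ) / ((2 ^ n : ℕ) : ℝ))

lemma cfac_nonneg (hD0 : 0 < D) (hD1 : D < 1) (G : Finset (Fin (2 ^ n)))
    (y : Fin (2 ^ n) → ZMod 2) (j : Fin (2 ^ n)) (u : Fin (2 ^ n) → ZMod 2) :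
    0 ≤ cfac D n G y j u := by
  unfold cfac
  split
  · norm_num
  · exact (post_pos hD0 hD1 y j u).le

lemma hamming_cast (y x : Fin (2 ^ n) → ZMod 2) :
    ((hammingDist y x : ℕ) : ℝ) = ∑ k : Fin (2 ^ n), if y k ≠ x k then (1 : ℝ) else 0 := by
  rw [hammingDist, Finset.card_filter]
  push_cast
  apply Finset.sum_congr rfl
  intro k _
  split <;> norm_num

lemma sum_prod_bsc_dist (hD0 : 0 < D) (hD1 : D < 1) (y : Fin (2 ^ n) → ZMod 2) :
    ∑ x : Fin (2 ^ n) → ZMod 2, (∏ j, bsc D (y j) (x j)) * ((hammingDist y x : ℕ) : ℝ)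
      = (2 ^ n : ℕ) * D := by
  have key : ∀ k : Fin (2 ^ n),
      ∑ x : Fin (2 ^ n) → ZMod 2,
        (∏ j, bsc D (y j) (x j)) * (if y k ≠ x k then (1 : ℝ) else 0) = D := by
    intro k
    have hpt : ∀ x : Fin (2 ^ n) → ZMod 2,
        (∏ j, bsc D (y j) (x j)) * (if y k ≠ x k then (1 : ℝ) else 0)
        = ∏ j, (fun j b => bsc D (y j) b *
            (if j = k then (if y j ≠ b then (1 : ℝ) else 0) else 1)) j (x j) := by
      intro x
      rw [Finset.prod_mul_distrib]
      congr 1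
      rw [Finset.prod_ite_eq' Finset.univ k (fun j => if y j ≠ x j then (1 : ℝ) else 0)]
      simp
    rw [Finset.sum_congr rfl (fun x _ => hpt x), sum_fun_prod n
      (fun j b => bsc D (y j) b * (if j = k then (if y j ≠ b then (1 : ℝ) else 0) else 1))]
    have hterm : ∀ j : Fin (2 ^ n),
        (∑ b : ZMod 2, bsc D (y j) b * (if j = k then (if y j ≠ b then (1 : ℝ) else 0) else 1))
        = if j = k then D else 1 := by
      intro j
      by_cases hj : j = k
      · rw [if_pos hj]
        rw [show (∑ b : ZMod 2, bsc D (y j) b * (if j = k then (if y j ≠ b then (1:ℝ) else 0) else 1))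
          = ∑ b : ZMod 2, bsc D (y j) b * (if y j ≠ b then (1:ℝ) else 0) from
          Finset.sum_congr rfl (fun b _ => by rw [if_pos hj])]
        rw [sum_zmod2]
        rcases zmod2_eq (y j) with h | h <;> rw [h] <;> simp [bsc] <;> norm_num
      · rw [if_neg hj]
        rw [show (∑ b : ZMod 2, bsc D (y j) b * (if j = k then (if y j ≠ b then (1:ℝ) else 0) else 1))
          = ∑ b : ZMod 2, bsc D (y j) b from
          Finset.sum_congr rfl (fun b _ => by rw [if_neg hj, mul_one])]
        exact sum_bsc_right D (y j)
    rw [Finset.prod_congr rfl (fun j _ => hterm j),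
      Finset.prod_ite_eq' Finset.univ k (fun _ => D)]
    simp
  have : ∑ x : Fin (2 ^ n) → ZMod 2, (∏ j, bsc D (y j) (x j)) * ((hammingDist y x : ℕ) : ℝ)
      = ∑ k : Fin (2 ^ n), ∑ x : Fin (2 ^ n) → ZMod 2,
          (∏ j, bsc D (y j) (x j)) * (if y k ≠ x k then (1 : ℝ) else 0) := by
    rw [Finset.sum_comm]
    apply Finset.sum_congr rfl
    intro x _
    rw [hamming_cast, Finset.mul_sum]
  rw [this, Finset.sum_congr rfl (fun k _ => key k), Finset.sum_const, Finset.card_univ,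
    Fintype.card_fin, nsmul_eq_mul]

lemma Phi_empty (hD0 : 0 < D) (hD1 : D < 1) : Phi D n (∅ : Finset (Fin (2 ^ n))) = D := by
  unfold Phi
  have hN : ((2 ^ n : ℕ) : ℝ) ≠ 0 := by positivity
  have hinner : ∀ y : Fin (2 ^ n) → ZMod 2,
      ∑ u : Fin (2 ^ n) → ZMod 2, (∏ j, cfac D n ∅ y j u) *
        ((hammingDist y (polarEnc n u) : ℝ) / ((2 ^ n : ℕ) : ℝ)) = D := by
    intro y
    have hc : ∀ u, (∏ j, cfac D n ∅ y j u) = Wprod D n y u := by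
      intro u
      rw [show (∏ j, cfac D n ∅ y j u) = ∏ j, post D n y j u from
        Finset.prod_congr rfl (fun j _ => by unfold cfac; rw [if_neg (Finset.notMem_empty j)])]
      exact prod_post_eq_Wprod hD0 hD1 y u
    rw [Finset.sum_congr rfl (fun u _ => by rw [hc u])]
    rw [Fintype.sum_bijective (polarEnc n) (polarEnc_bijective n)
      (fun u => Wprod D n y u * (((hammingDist y (polarEnc n u) : ℕ) : ℝ) / ((2 ^ n : ℕ) : ℝ)))
      (fun x => (∏ j, bsc D (y j) (x j)) * (((hammingDist y x : ℕ) : ℝ) / ((2 ^ n : ℕ) : ℝ)))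
      (fun u => rfl)]
    rw [Finset.sum_congr rfl (fun x _ => (mul_div_assoc ((∏ j, bsc D (y j) (x j)))
      ((hammingDist y x : ℕ) : ℝ) ((2 ^ n : ℕ) : ℝ)).symm), ← Finset.sum_div,
      sum_prod_bsc_dist hD0 hD1 y, mul_comm, mul_div_assoc, div_self hN, mul_one]
  rw [Finset.sum_congr rfl (fun y _ => by rw [hinner y]), Finset.sum_const, Finset.card_univ,
    Fintype.card_fun, nsmul_eq_mul]
  simp only [Fintype.card_fin, ZMod.card]
  push_cast
  rw [← mul_assoc, mul_inv_cancel₀ (by positivity : ((2 : ℝ) ^ (2 ^ n)) ≠ 0), one_mul]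


-- ## Part 6b : the hybrid step

lemma Phi_step (hD0 : 0 < D) (hD1 : D < 1) {δ : ℝ} (hδ : 0 ≤ δ)
    (m : Fin (2 ^ n)) (G : Finset (Fin (2 ^ n))) (hmin : ∀ x ∈ G, m < x)
    (hZ : 1 - 2 * δ ^ 2 ≤ Zi D n m) :
    Phi D n (insert m G) ≤ Phi D n G + 2 * δ := by
  classical
  have hmG : m ∉ G := fun h => absurd (hmin m h) (lt_irrefl m)
  set h : (Fin (2 ^ n) → ZMod 2) → (Fin (2 ^ n) → ZMod 2) → ℝ :=
    fun y u => |1 / 2 - post D n y m u| with hh_def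
  -- Step 1 : difference bound
  have hbound : Phi D n (insert m G) - Phi D n G ≤
      ∑ y : Fin (2 ^ n) → ZMod 2, ((2 : ℝ) ^ (2 ^ n))⁻¹ *
        ∑ u : Fin (2 ^ n) → ZMod 2,
          (∏ j ∈ Finset.univ.erase m, cfac D n G y j u) * h y u := by
    unfold Phi
    rw [← Finset.sum_sub_distrib]
    apply Finset.sum_le_sum
    intro y _
    rw [← mul_sub]
    apply mul_le_mul_of_nonneg_left _ (by positivity)
    rw [← Finset.sum_sub_distrib]
    apply Finset.sum_le_sum
    intro u _
    have h1 : ∏ j, cfac D n (insert m G) y j u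
        = (1 / 2) * ∏ j ∈ Finset.univ.erase m, cfac D n (insert m G) y j u := by
      rw [← Finset.mul_prod_erase Finset.univ _ (Finset.mem_univ m)]
      congr 1
      unfold cfac
      rw [if_pos (Finset.mem_insert_self m G)]
    have herase : ∏ j ∈ Finset.univ.erase m, cfac D n (insert m G) y j u
        = ∏ j ∈ Finset.univ.erase m, cfac D n G y j u := by
      apply Finset.prod_congr rfl
      intro j hj
      have hjm : j ≠ m := (Finset.mem_erase.mp hj).1
      unfold cfac
      by_cases hjG : j ∈ G
      · rw [if_pos (Finset.mem_insert_of_mem hjG), if_pos hjG]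
      · rw [if_neg (fun hc => hjG ((Finset.mem_insert.mp hc).resolve_left hjm)), if_neg hjG]
    have h2 : ∏ j, cfac D n G y j u
        = post D n y m u * ∏ j ∈ Finset.univ.erase m, cfac D n G y j u := by
      rw [← Finset.mul_prod_erase Finset.univ _ (Finset.mem_univ m)]
      congr 1
      unfold cfac
      rw [if_neg hmG]
    rw [h1, herase, h2]
    set P := ∏ j ∈ Finset.univ.erase m, cfac D n G y j u with hP
    have hPnn : 0 ≤ P :=
      Finset.prod_nonneg fun j _ => cfac_nonneg hD0 hD1 G y j u
    set dd := ((hammingDist y (polarEnc n u) : ℕ) : ℝ) / ((2 ^ n : ℕ) : ℝ) with hdd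
    have hdd0 : 0 ≤ dd := by positivity
    have hdd1 : dd ≤ 1 := by
      rw [hdd, div_le_one (by positivity)]
      have := hammingDist_le_card_fintype (x := y) (y := polarEnc n u)
      rw [Fintype.card_fin] at this
      exact_mod_cast this
    have habs : (1 / 2 - post D n y m u) ≤ |1 / 2 - post D n y m u| := le_abs_self _
    calc (1 / 2) * P * dd - post D n y m u * P * dd
        = (1 / 2 - post D n y m u) * (P * dd) := by ring
      _ ≤ |1 / 2 - post D n y m u| * (P * dd) := by
          apply mul_le_mul_of_nonneg_right habs (by positivity)
      _ ≤ |1 / 2 - post D n y m u| * (P * 1) := by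
          apply mul_le_mul_of_nonneg_left _ (abs_nonneg _)
          exact mul_le_mul_of_nonneg_left hdd1 hPnn
      _ = P * h y u := by rw [hh_def]; ring
  -- Step 2 : sum out the top coordinates
  have hdep : ∀ y (j : Fin (2 ^ n)) (u u' : Fin (2 ^ n) → ZMod 2),
      (∀ k, k ≤ j → u k = u' k) → cfac D n G y j u = cfac D n G y j u' := by
    intro y j u u' hk
    unfold cfac
    split
    · rfl
    · exact post_congr y j hk
  have hsum : ∀ y (j : Fin (2 ^ n)) (u : Fin (2 ^ n) → ZMod 2),
      cfac D n G y j (Function.update u j 0) + cfac D n G y j (Function.update u j 1) = 1 := by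
    intro y j u
    unfold cfac
    split
    · norm_num
    · exact post_add_one hD0 hD1 y j u
  have hhcong : ∀ y (u u' : Fin (2 ^ n) → ZMod 2), (∀ k, k ≤ m → u k = u' k) →
      h y u = h y u' := by
    intro y u u' hk
    rw [hh_def]
    simp only
    rw [post_congr y m hk]
  have hfe : Finset.univ.erase m
      = Finset.univ.filter (fun j : Fin (2 ^ n) => j ≠ m ∧ (j : ℕ) < 2 ^ n) := by
    ext j
    simp only [Finset.mem_erase, Finset.mem_univ, and_true, Finset.mem_filter, true_and]
    exact ⟨fun hj => ⟨hj, j.isLt⟩, fun hj => hj.1⟩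
  have hout : ∀ y : Fin (2 ^ n) → ZMod 2,
      ∑ u : Fin (2 ^ n) → ZMod 2,
        (∏ j ∈ Finset.univ.erase m, cfac D n G y j u) * h y u
      = ∑ u ∈ BT n ((m : ℕ) + 1), SS D n y (m : ℕ) u * h y u := by
    intro y
    have htop := sum_out_top m (cfac D n G y) (hdep y) (hsum y) (h y) (hhcong y)
      (2 ^ n) m.isLt le_rfl
    rw [BT_top, ← hfe] at htop
    rw [htop]
    apply Finset.sum_congr rfl
    intro u _
    congr 1
    have hpp : ∀ j ∈ Finset.univ.filter (fun j : Fin (2 ^ n) => (j : ℕ) < (m : ℕ)),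
        cfac D n G y j u = post D n y j u := by
      intro j hj
      have hjm : (j : ℕ) < (m : ℕ) := (Finset.mem_filter.mp hj).2
      unfold cfac
      rw [if_neg]
      intro hjG
      have := hmin j hjG
      rw [Fin.lt_def] at this
      omega
    rw [Finset.prod_congr rfl hpp, prod_post_eq_SS hD0 hD1 y (m : ℕ) (le_of_lt m.isLt) u]
  -- Step 3 : pair over the value at m
  have hpair : ∀ y : Fin (2 ^ n) → ZMod 2,
      ∑ u ∈ BT n ((m : ℕ) + 1), SS D n y (m : ℕ) u * h y u
      = ∑ u ∈ BT n (m : ℕ), (2 : ℝ) ^ (2 ^ n - 1)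
          * |Wi D n y m u - Wi D n y m (Function.update u m 1)| := by
    intro y
    rw [sum_BT_succ (m : ℕ) m.isLt]
    apply Finset.sum_congr rfl
    intro u hu
    have hu0 : u m = 0 := (mem_BT.mp hu) m le_rfl
    have hSSe : SS D n y (m : ℕ) (Function.update u m 1) = SS D n y (m : ℕ) u :=
      SS_congr y (m : ℕ) (fun j hj => Function.update_of_ne (by intro hh; subst hh; omega) _ _)
    have hp01 : post D n y m u + post D n y m (Function.update u m 1) = 1 := by
      have := post_add_one hD0 hD1 y m u
      rwa [update_self_zmod u m hu0] at this
    set p0 := post D n y m u with hp0def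
    set p1 := post D n y m (Function.update u m 1) with hp1def
    have hSSpos := SS_pos hD0 hD1 y (m : ℕ) u
    have habs2 : h y u + h y (Function.update u m 1) = |p0 - p1| := by
      rw [hh_def]
      simp only
      rw [show (1 : ℝ) / 2 - p0 = (p1 - p0) / 2 by linarith,
        show (1 : ℝ) / 2 - p1 = (p0 - p1) / 2 by linarith,
        abs_div, abs_div, abs_sub_comm p1 p0, abs_two]
      ring
    have hdiv : p0 - p1 = (SI D n y m u - SI D n y m (Function.update u m 1))
        / SS D n y (m : ℕ) u := by
      rw [hp0def, hp1def, post_eq_SI y m u, post_eq_SI y m (Function.update u m 1), hSSe,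
        div_sub_div_same]
    have hSI : ∀ w, SI D n y m w = (2 : ℝ) ^ (2 ^ n - 1) * Wi D n y m w := by
      intro w
      rw [Wi_eq_SI, ← mul_assoc, mul_inv_cancel₀ (by positivity), one_mul]
    calc SS D n y (m : ℕ) u * h y u
          + SS D n y (m : ℕ) (Function.update u m 1) * h y (Function.update u m 1)
        = SS D n y (m : ℕ) u * (h y u + h y (Function.update u m 1)) := by rw [hSSe]; ring
      _ = SS D n y (m : ℕ) u * |p0 - p1| := by rw [habs2]
      _ = |SI D n y m u - SI D n y m (Function.update u m 1)| := by
          rw [hdiv, abs_div, abs_of_pos hSSpos, mul_comm,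
            div_mul_cancel₀ _ (ne_of_gt hSSpos)]
      _ = (2 : ℝ) ^ (2 ^ n - 1) * |Wi D n y m u - Wi D n y m (Function.update u m 1)| := by
          rw [hSI, hSI, ← mul_sub, abs_mul, abs_of_pos (by positivity)]
  -- Step 4 : conclude via the Bhattacharyya bound
  have hhalf : ((2 : ℝ) ^ (2 ^ n))⁻¹ * (2 : ℝ) ^ (2 ^ n - 1) = 1 / 2 := by
    have h1 : (2 : ℕ) ^ (2 ^ n) = 2 ^ (2 ^ n - 1) * 2 := by
      rw [← pow_succ]
      congr 1
      have : 1 ≤ 2 ^ n := Nat.one_le_two_pow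
      omega
    have h2 : (2 : ℝ) ^ (2 ^ n) = (2 : ℝ) ^ (2 ^ n - 1) * 2 := by exact_mod_cast h1
    rw [h2, mul_inv, mul_comm, ← mul_assoc, mul_inv_cancel₀ (by positivity), one_mul,
      one_div]
  have hEi := Ei_le hD0 hD1 hδ m hZ
  have hfinal : ∑ y : Fin (2 ^ n) → ZMod 2, ((2 : ℝ) ^ (2 ^ n))⁻¹ *
      ∑ u : Fin (2 ^ n) → ZMod 2,
        (∏ j ∈ Finset.univ.erase m, cfac D n G y j u) * h y u ≤ 2 * δ := by
    calc ∑ y : Fin (2 ^ n) → ZMod 2, ((2 : ℝ) ^ (2 ^ n))⁻¹ *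
        ∑ u : Fin (2 ^ n) → ZMod 2,
          (∏ j ∈ Finset.univ.erase m, cfac D n G y j u) * h y u
        = ∑ y : Fin (2 ^ n) → ZMod 2, ∑ u ∈ BT n (m : ℕ),
            |Wi D n y m u - Wi D n y m (Function.update u m 1)| / 2 := by
          apply Finset.sum_congr rfl
          intro y _
          rw [hout y, hpair y, Finset.mul_sum]
          apply Finset.sum_congr rfl
          intro u _
          rw [← mul_assoc, hhalf]
          ring
      _ ≤ 2 * δ := hEi
  linarith [hbound, hfinal]


-- ## Part 7 : merging the frozen-vector average, and the main theorem

lemma prod_cfac_eq (hD0 : 0 < D) (hD1 : D < 1) (F : Finset (Fin (2 ^ n)))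
    (y u : Fin (2 ^ n) → ZMod 2) :
    ∏ j, cfac D n F y j u = ((2 : ℝ) ^ F.card)⁻¹ * ∏ i ∈ Fᶜ, post D n y i u := by
  rw [← Finset.prod_mul_prod_compl F (fun j => cfac D n F y j u)]
  congr 1
  · rw [Finset.prod_congr rfl (fun j hj => by unfold cfac; rw [if_pos hj]),
      Finset.prod_const, one_div, inv_pow]
  · apply Finset.prod_congr rfl
    intro j hj
    unfold cfac
    rw [if_neg (Finset.mem_compl.mp hj)]

lemma LHS_eq_Phi (hD0 : 0 < D) (hD1 : D < 1) (F : Finset (Fin (2 ^ n))) :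
    ∑ ut ∈ Finset.univ.filter (fun ut : Fin (2 ^ n) → ZMod 2 => ∀ i, i ∉ F → ut i = 0),
        ((2 : ℝ) ^ F.card)⁻¹ * ((((2 ^ n : ℕ) : ℝ))⁻¹ * avgDist D n F ut)
      = Phi D n F := by
  classical
  set Fr := Finset.univ.filter (fun ut : Fin (2 ^ n) → ZMod 2 => ∀ i, i ∉ F → ut i = 0) with hFr
  have hterm : ∀ ut : Fin (2 ^ n) → ZMod 2,
      ((2 : ℝ) ^ F.card)⁻¹ * ((((2 ^ n : ℕ) : ℝ))⁻¹ * avgDist D n F ut)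
      = ∑ y : Fin (2 ^ n) → ZMod 2, ∑ u ∈ Finset.univ.filter
          (fun u : Fin (2 ^ n) → ZMod 2 => ∀ i ∈ F, u i = ut i),
          ((2 : ℝ) ^ (2 ^ n))⁻¹ * (((2 : ℝ) ^ F.card)⁻¹ * ((∏ i ∈ Fᶜ, post D n y i u) *
            (((hammingDist y (polarEnc n u) : ℕ) : ℝ) / ((2 ^ n : ℕ) : ℝ)))) := by
    intro ut
    unfold avgDist
    simp only [Finset.mul_sum]
    apply Finset.sum_congr rfl
    intro y _
    apply Finset.sum_congr rfl
    intro u _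
    ring
  rw [Finset.sum_congr rfl (fun ut _ => hterm ut), Finset.sum_comm]
  unfold Phi
  apply Finset.sum_congr rfl
  intro y _
  have hfib : ∀ ut ∈ Fr, Finset.univ.filter
      (fun u : Fin (2 ^ n) → ZMod 2 => ∀ i ∈ F, u i = ut i)
      = Finset.univ.filter (fun u : Fin (2 ^ n) → ZMod 2 =>
          (fun w : Fin (2 ^ n) → ZMod 2 => fun i : Fin (2 ^ n) => if i ∈ F then w i else 0) u
            = ut) := by
    intro ut hut
    have hut0 : ∀ i, i ∉ F → ut i = 0 := (Finset.mem_filter.mp hut).2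
    apply filterU_congr
    intro u
    constructor
    · intro hu
      funext i
      show (if i ∈ F then u i else 0) = ut i
      by_cases hi : i ∈ F
      · rw [if_pos hi]; exact hu i hi
      · rw [if_neg hi]; exact (hut0 i hi).symm
    · intro hu i hi
      have h2 : (if i ∈ F then u i else 0) = ut i := congrFun hu i
      rwa [if_pos hi] at h2
  rw [Finset.sum_congr rfl (fun ut hut => by rw [hfib ut hut])]
  rw [Finset.sum_fiberwise_of_maps_to (fun u _ => Finset.mem_filter.mpr
    ⟨Finset.mem_univ _, fun i hi => if_neg hi⟩)]
  rw [Finset.mul_sum]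
  apply Finset.sum_congr rfl
  intro u _
  rw [prod_cfac_eq hD0 hD1 F y u]
  ring

/-- **Average distortion bound.**  If `Z^{(i)} ≥ 1 − 2δ²` for every frozen index, then the
average over the `2^{|F|}` frozen vectors (represented by the words supported on `F`) of
the normalized distortion is at most `D + 2|F|δ`. -/
theorem average_distortion_bound (D : ℝ) (hD0 : 0 < D) (hD1 : D < 1)
    (n : ℕ) (δ : ℝ) (hδ : 0 ≤ δ) (F : Finset (Fin (2 ^ n)))
    (hF : ∀ i ∈ F, 1 - 2 * δ ^ 2 ≤ Zi D n i) :
    ∑ ut ∈ Finset.univ.filter (fun ut : Fin (2 ^ n) → ZMod 2 => ∀ i, i ∉ F → ut i = 0),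
        ((2 : ℝ) ^ F.card)⁻¹ * ((((2 ^ n : ℕ) : ℝ))⁻¹ * avgDist D n F ut)
      ≤ D + 2 * F.card * δ := by
  rw [LHS_eq_Phi hD0 hD1 F]
  have main : ∀ G : Finset (Fin (2 ^ n)), G ⊆ F →
      Phi D n G ≤ D + 2 * G.card * δ := by
    intro G
    induction G using Finset.induction_on_min with
    | empty =>
      intro _
      rw [Phi_empty hD0 hD1]
      simp
    | insert a s hlt ih =>
      intro hsub
      have ha : a ∈ F := hsub (Finset.mem_insert_self a s)
      have has : a ∉ s := fun hc => lt_irrefl a (hlt a hc)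
      have hstep := Phi_step hD0 hD1 hδ a s hlt (hF a ha)
      have hs : s ⊆ F := fun x hx => hsub (Finset.mem_insert_of_mem hx)
      have hcard : (insert a s).card = s.card + 1 := Finset.card_insert_of_notMem has
      calc Phi D n (insert a s) ≤ Phi D n s + 2 * δ := hstep
        _ ≤ D + 2 * s.card * δ + 2 * δ := by linarith [ih hs]
        _ = D + 2 * (insert a s).card * δ := by rw [hcard]; push_cast; ring
  exact main F (subset_refl F)

end
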